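/- Let C, A : S² → ℝ be continuous with A ≥ 0, and let g : ℝ × S² → ℝ be continuous with compact support. Define S(t) := ∫_{S²} ∫_ℝ max(u − C(n) − t A(n), 0) · g(u,n)² du dσ(n) for t ∈ ℝ. Then S is twice differentiable on ℝ with S''(t) = ∫_{S²} A(n)² g(C(n) + t A(n), n)² dσ(n) ≥ 0; in particular S is convex on ℝ. -/

import Mathlib

open MeasureTheory Metric Filter
open scoped Topology InnerProductSpace

noncomputable section

/-- `E3` is Euclidean three-dimensional space. -/
abbrev E3 : Type := EuclideanSpace ℝ (Fin 3)

/-- `S2` is the unit sphere in `E3`. -/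
abbrev S2 : Type := Metric.sphere (0 : E3) 1

/-- The standard surface measure on the unit sphere `S²`. -/
def sphereMeasure : Measure S2 := (volume : Measure E3).toSphere

/-- Rewrite the full-line integral as an interval integral. -/
lemma auxA1 {w : ℝ → ℝ} (hw : Continuous w) {M : ℝ} (hM : ∀ u, M ≤ u → w u = 0) (x : ℝ) :
    (∫ u : ℝ, max (u - x) 0 * w u) = ∫ u in x..M, (u - x) * w u := by
  have h1 : (fun u => max (u - x) 0 * w u)
      = Set.indicator (Set.Ioc x M) (fun u => (u - x) * w u) := by
    funext u
    by_cases hu : u ∈ Set.Ioc x M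
    · rw [Set.indicator_of_mem hu, max_eq_left (by linarith [hu.1] : (0:ℝ) ≤ u - x)]
    · rw [Set.indicator_of_notMem hu]
      rcases lt_or_ge x u with h | h
      · have hMu : M < u := by
          by_contra h'
          exact hu ⟨h, not_lt.1 h'⟩
        rw [hM u hMu.le, mul_zero]
      · rw [max_eq_right (by linarith), zero_mul]
  rw [h1, MeasureTheory.integral_indicator measurableSet_Ioc]
  rcases le_or_gt x M with h | h
  · rw [intervalIntegral.integral_of_le h]
  · rw [intervalIntegral.integral_of_ge h.le]
    have e1 : ∫ u in Set.Ioc x M, (u - x) * w u = 0 := by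
      rw [Set.Ioc_eq_empty (not_lt.2 h.le)]
      simp
    have e2 : ∫ u in Set.Ioc M x, (u - x) * w u = 0 := by
      apply MeasureTheory.setIntegral_eq_zero_of_forall_eq_zero
      intro u hu
      rw [hM u hu.1.le, mul_zero]
    rw [e1, e2, neg_zero]

/-- FTC for the primitive with moving lower endpoint. -/
lemma auxA3 {w : ℝ → ℝ} (hw : Continuous w) (M x : ℝ) :
    HasDerivAt (fun y => ∫ u in y..M, w u) (-(w x)) x :=
  intervalIntegral.integral_hasDerivAt_left (hw.intervalIntegrable x M)
    (hw.stronglyMeasurableAtFilter _ _) hw.continuousAt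

/-- Derivative of `x ↦ ∫_x^M (u-x) w(u) du`. -/
lemma auxA2 {w : ℝ → ℝ} (hw : Continuous w) (M x : ℝ) :
    HasDerivAt (fun y => ∫ u in y..M, (u - y) * w u) (-(∫ u in x..M, w u)) x := by
  have heq : (fun y => ∫ u in y..M, (u - y) * w u)
      = fun y => (∫ u in y..M, u * w u) - y * ∫ u in y..M, w u := by
    funext y
    have h : ∀ u, (u - y) * w u = u * w u - y * w u := fun u => by ring
    simp_rw [h]
    rw [intervalIntegral.integral_sub (f := fun u => u * w u) (g := fun u => y * w u) ((continuous_id'.mul hw).intervalIntegrable _ _)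
      ((continuous_const.mul hw).intervalIntegrable _ _),
      intervalIntegral.integral_const_mul]
  rw [heq]
  have h1 : HasDerivAt (fun y => ∫ u in y..M, u * w u) (-(x * w x)) x :=
    auxA3 (continuous_id'.mul hw) M x
  have h2 := auxA3 hw M x
  have h3 : HasDerivAt (fun y => y * ∫ u in y..M, w u)
      (1 * (∫ u in x..M, w u) + x * (-(w x))) x := (hasDerivAt_id x).mul h2
  refine (h1.sub h3).congr_deriv ?_
  ring

theorem statement11 (C A : S2 → ℝ) (hC : Continuous C) (hA : Continuous A)
    (hA0 : ∀ n, 0 ≤ A n) (g : ℝ × S2 → ℝ) (hg : Continuous g)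
    (hgsupp : HasCompactSupport g) :
    ∃ S' : ℝ → ℝ,
      (∀ t : ℝ, HasDerivAt
        (fun s : ℝ => ∫ n : S2,
          (∫ u : ℝ, max (u - C n - s * A n) 0 * (g (u, n)) ^ 2) ∂sphereMeasure)
        (S' t) t) ∧
      (∀ t : ℝ, HasDerivAt S'
        (∫ n : S2, (A n) ^ 2 * (g (C n + t * A n, n)) ^ 2 ∂sphereMeasure) t) ∧
      (∀ t : ℝ, 0 ≤ ∫ n : S2, (A n) ^ 2 * (g (C n + t * A n, n)) ^ 2 ∂sphereMeasure) ∧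
      ConvexOn ℝ Set.univ
        (fun s : ℝ => ∫ n : S2,
          (∫ u : ℝ, max (u - C n - s * A n) 0 * (g (u, n)) ^ 2) ∂sphereMeasure) := by
  haveI : IsFiniteMeasure sphereMeasure := by unfold sphereMeasure; infer_instance
  -- a bound `M` outside of which `g` vanishes
  obtain ⟨r, hr⟩ := ((hgsupp : IsCompact (tsupport g)).image continuous_fst).isBounded.subset_closedBall 0
  set M : ℝ := |r| + 1 with hMdef
  have hM0 : (0:ℝ) < M := by positivity
  have hgz : ∀ (u : ℝ) (n : S2), M ≤ |u| → g (u, n) = 0 := by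
    intro u n hu
    by_contra h
    have h1 : (u, n) ∈ tsupport g := subset_tsupport g h
    have h2 : u ∈ Prod.fst '' tsupport g := ⟨(u, n), h1, rfl⟩
    have h3 := hr h2
    rw [Metric.mem_closedBall, Real.dist_eq, sub_zero] at h3
    have : |u| ≤ |r| := h3.trans (le_abs_self r)
    linarith
  -- sup bounds for `A` and `g`
  obtain ⟨Ka, hKa⟩ := (isCompact_univ : IsCompact (Set.univ : Set S2)).exists_bound_of_continuousOn
    hA.continuousOn
  obtain ⟨Kg', hKg'⟩ := (hgsupp : IsCompact (tsupport g)).exists_bound_of_continuousOn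
    hg.continuousOn
  set Kg : ℝ := max Kg' 0 with hKgdef
  have hKg : ∀ p, |g p| ≤ Kg := by
    intro p
    by_cases hp : p ∈ tsupport g
    · exact (hKg' p hp).trans (le_max_left _ _)
    · rw [image_eq_zero_of_notMem_tsupport hp, abs_zero]
      exact le_max_right _ _
  have hKa0 : ∀ n, |A n| ≤ Ka := fun n => hKa n (Set.mem_univ n)
  -- basic per-`n` facts
  have hwc : ∀ n : S2, Continuous fun u : ℝ => g (u, n) ^ 2 := fun n =>
    (hg.comp (continuous_id.prodMk continuous_const)).pow 2
  have hwz : ∀ (n : S2) (u : ℝ), M ≤ u → g (u, n) ^ 2 = 0 := by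
    intro n u hu
    rw [hgz u n (hu.trans (le_abs_self u)), zero_pow (by norm_num)]
  set x : S2 → ℝ → ℝ := fun n s => C n + s * A n with hxdef
  have hxderiv : ∀ (n : S2) (s : ℝ), HasDerivAt (fun s => x n s) (A n) s := by
    intro n s
    simpa [hxdef] using ((hasDerivAt_id s).mul_const (A n)).const_add (C n)
  have hxc : ∀ s : ℝ, Continuous fun n => x n s := fun s => hC.add (continuous_const.mul hA)
  set H : S2 → ℝ → ℝ := fun n y => ∫ u in y..M, g (u, n) ^ 2 with hHdef
  set D1 : ℝ → S2 → ℝ := fun s n => -(H n (x n s)) * A n with hD1def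
  set F : ℝ → S2 → ℝ := fun s n => ∫ u : ℝ, max (u - C n - s * A n) 0 * (g (u, n)) ^ 2
    with hFdef
  have hFeq : ∀ (s : ℝ) (n : S2), F s n = ∫ u in (x n s)..M, (u - x n s) * g (u, n) ^ 2 := by
    intro s n
    have : (fun u : ℝ => max (u - C n - s * A n) 0 * (g (u, n)) ^ 2)
        = fun u : ℝ => max (u - x n s) 0 * g (u, n) ^ 2 := by
      funext u; rw [hxdef]; ring_nf
    rw [hFdef]
    simp only
    rw [this, auxA1 (hwc n) (hwz n) (x n s)]
  -- first derivative pointwise in `n`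
  have hFderiv : ∀ (n : S2) (s : ℝ), HasDerivAt (fun s => F s n) (D1 s n) s := by
    intro n s
    have h1 := auxA2 (hwc n) M (x n s)
    have h2 := (h1.comp s (hxderiv n s))
    have heq : (fun s => F s n) = fun s => ∫ u in (x n s)..M, (u - x n s) * g (u, n) ^ 2 :=
      funext fun s => hFeq s n
    rw [heq]
    exact h2
  -- second derivative pointwise in `n`
  have hD1deriv : ∀ (n : S2) (s : ℝ),
      HasDerivAt (fun s => D1 s n) (A n ^ 2 * g (x n s, n) ^ 2) s := by
    intro n s
    have h2 := auxA3 (hwc n) M (x n s)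
    have h3 := ((h2.comp s (hxderiv n s)).neg).mul_const (A n)
    refine h3.congr_deriv ?_
    ring
  -- continuity in `n`
  have hFcont : ∀ s : ℝ, Continuous fun n => F s n := by
    intro s
    have hfc : Continuous (Function.uncurry fun (n : S2) (u : ℝ) =>
        (u - x n s) * g (u, n) ^ 2) := by
      apply Continuous.mul
      · exact continuous_snd.sub ((hxc s).comp continuous_fst)
      · exact (hg.comp (continuous_snd.prodMk continuous_fst)).pow 2
    have := (intervalIntegral.continuous_parametric_intervalIntegral_of_continuous
      (μ := volume) (a₀ := M) hfc (hxc s)).neg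
    convert this using 1
    funext n
    rw [hFeq s n, intervalIntegral.integral_symm]
    rfl
  have hD1cont : ∀ s : ℝ, Continuous fun n => D1 s n := by
    intro s
    have hfc : Continuous (Function.uncurry fun (n : S2) (u : ℝ) => g (u, n) ^ 2) :=
      (hg.comp (continuous_snd.prodMk continuous_fst)).pow 2
    have := (intervalIntegral.continuous_parametric_intervalIntegral_of_continuous
      (μ := volume) (a₀ := M) hfc (hxc s)).mul hA
    convert this using 1
    funext n
    rw [hD1def]
    simp only
    rw [hHdef]
    simp only
    rw [intervalIntegral.integral_symm]
    simp only [Pi.mul_apply]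
    ring
  have hD2cont : ∀ s : ℝ, Continuous fun n => A n ^ 2 * g (x n s, n) ^ 2 := by
    intro s
    exact (hA.pow 2).mul ((hg.comp ((hxc s).prodMk continuous_id)).pow 2)
  -- integrability of continuous functions on the sphere
  have hint : ∀ f : S2 → ℝ, Continuous f → Integrable f sphereMeasure := by
    intro f hf
    exact hf.integrable_of_hasCompactSupport
      (IsCompact.of_isClosed_subset isCompact_univ (isClosed_tsupport f) (Set.subset_univ _))
  -- uniform bounds
  have hHbound : ∀ (n : S2) (y : ℝ), |H n y| ≤ Kg ^ 2 * (2 * M) := by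
    intro n y
    have hwint : Integrable (fun u => g (u, n) ^ 2) volume := by
      have hsupp : (fun u : ℝ => g (u, n) ^ 2)
          = Set.indicator (Set.Icc (-M) M) (fun u => g (u, n) ^ 2) := by
        symm
        rw [Set.indicator_eq_self]
        intro u hu
        simp only [Function.mem_support] at hu
        by_contra h
        simp only [Set.mem_Icc, not_and_or, not_le] at h
        have : M ≤ |u| := by
          rcases h with h | h
          · rw [abs_of_neg (by linarith)]; linarith
          · rw [abs_of_pos (by linarith)]; linarith
        exact hu (by rw [hgz u n this]; norm_num)
      rw [hsupp]
      exact ((hwc n).integrableOn_Icc).integrable_indicator measurableSet_Icc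
    have b1 : ‖(∫ u in y..M, g (u, n) ^ 2 : ℝ)‖ ≤ ∫ u in Set.uIoc y M, ‖g (u, n) ^ 2‖ :=
      intervalIntegral.norm_integral_le_integral_norm_uIoc
    have b2 : (∫ u in Set.uIoc y M, ‖g (u, n) ^ 2‖) = ∫ u in Set.uIoc y M, g (u, n) ^ 2 := by
      congr 1
      funext u
      rw [Real.norm_eq_abs]
      exact abs_of_nonneg (sq_nonneg _)
    have b3 : (∫ u in Set.uIoc y M, g (u, n) ^ 2) ≤ ∫ u, g (u, n) ^ 2 :=
      setIntegral_le_integral hwint (ae_of_all _ fun u => sq_nonneg _)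
    have b4 : (∫ u, g (u, n) ^ 2) ≤ Kg ^ 2 * (2 * M) := by
      have hsupp : (fun u : ℝ => g (u, n) ^ 2)
          = Set.indicator (Set.Icc (-M) M) (fun u => g (u, n) ^ 2) := by
        symm
        rw [Set.indicator_eq_self]
        intro u hu
        simp only [Function.mem_support] at hu
        by_contra h
        simp only [Set.mem_Icc, not_and_or, not_le] at h
        have : M ≤ |u| := by
          rcases h with h | h
          · rw [abs_of_neg (by linarith)]; linarith
          · rw [abs_of_pos (by linarith)]; linarith
        exact hu (by rw [hgz u n this]; norm_num)
      rw [hsupp, MeasureTheory.integral_indicator measurableSet_Icc]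
      have : (∫ u in Set.Icc (-M) M, g (u, n) ^ 2) ≤ ∫ _u in Set.Icc (-M) M, Kg ^ 2 := by
        apply setIntegral_mono_on ((hwc n).integrableOn_Icc)
          (integrableOn_const (by rw [Real.volume_Icc]; exact ENNReal.ofReal_ne_top))
          measurableSet_Icc
        intro u _
        have := hKg (u, n)
        calc g (u, n) ^ 2 = |g (u, n)| ^ 2 := (sq_abs _).symm
          _ ≤ Kg ^ 2 := by
              apply pow_le_pow_left₀ (abs_nonneg _) this
      refine this.trans ?_
      rw [MeasureTheory.setIntegral_const, measureReal_def, Real.volume_Icc, smul_eq_mul]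
      rw [ENNReal.toReal_ofReal (by linarith)]
      nlinarith [sq_nonneg Kg]
    calc |H n y| ≤ ∫ u in Set.uIoc y M, g (u, n) ^ 2 := by
          rw [← b2, ← Real.norm_eq_abs]; exact b1
      _ ≤ ∫ u, g (u, n) ^ 2 := b3
      _ ≤ Kg ^ 2 * (2 * M) := b4
  have hD1bound : ∀ (n : S2) (s : ℝ), ‖D1 s n‖ ≤ Kg ^ 2 * (2 * M) * Ka := by
    intro n s
    rw [Real.norm_eq_abs, hD1def]
    simp only
    rw [abs_mul, abs_neg]
    have h1 := hHbound n (x n s)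
    have h2 := hKa0 n
    have h3 : (0:ℝ) ≤ |H n (x n s)| := abs_nonneg _
    have h4 : (0:ℝ) ≤ |A n| := abs_nonneg _
    nlinarith
  have hD2bound : ∀ (n : S2) (s : ℝ), ‖A n ^ 2 * g (x n s, n) ^ 2‖ ≤ Ka ^ 2 * Kg ^ 2 := by
    intro n s
    rw [Real.norm_eq_abs, abs_mul, abs_pow, abs_pow]
    have h1 := hKa0 n
    have h2 := hKg (x n s, n)
    have h3 : (0:ℝ) ≤ |A n| := abs_nonneg _
    have h4 : (0:ℝ) ≤ |g (x n s, n)| := abs_nonneg _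
    have hKa0' : (0:ℝ) ≤ Ka := h3.trans h1
    exact mul_le_mul (pow_le_pow_left₀ h3 h1 2) (pow_le_pow_left₀ h4 h2 2)
      (by positivity) (by positivity)
  -- the derivative of S
  set S' : ℝ → ℝ := fun s => ∫ n, D1 s n ∂sphereMeasure with hS'def
  have hS'deriv : ∀ t : ℝ, HasDerivAt (fun s => ∫ n, F s n ∂sphereMeasure) (S' t) t := by
    intro t
    have := hasDerivAt_integral_of_dominated_loc_of_deriv_le (μ := sphereMeasure)
      (F := F) (F' := D1) (x₀ := t) (bound := fun _ => Kg ^ 2 * (2 * M) * Ka)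
      (s := Metric.ball t 1) (Metric.ball_mem_nhds t one_pos)
      (Eventually.of_forall fun s => (hFcont s).aestronglyMeasurable)
      (hint _ (hFcont t))
      ((hD1cont t).aestronglyMeasurable)
      (ae_of_all _ fun n s _ => hD1bound n s)
      (integrable_const _)
      (ae_of_all _ fun n s _ => hFderiv n s)
    exact this.2
  have hS''deriv : ∀ t : ℝ, HasDerivAt S'
      (∫ n, A n ^ 2 * g (x n t, n) ^ 2 ∂sphereMeasure) t := by
    intro t
    have := hasDerivAt_integral_of_dominated_loc_of_deriv_le (μ := sphereMeasure)
      (F := D1) (F' := fun s n => A n ^ 2 * g (x n s, n) ^ 2) (x₀ := t)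
      (bound := fun _ => Ka ^ 2 * Kg ^ 2) (s := Metric.ball t 1) (Metric.ball_mem_nhds t one_pos)
      (Eventually.of_forall fun s => (hD1cont s).aestronglyMeasurable)
      (hint _ (hD1cont t))
      ((hD2cont t).aestronglyMeasurable)
      (ae_of_all _ fun n s _ => hD2bound n s)
      (integrable_const _)
      (ae_of_all _ fun n s _ => hD1deriv n s)
    exact this.2
  have hnonneg : ∀ t : ℝ, 0 ≤ ∫ n, A n ^ 2 * g (x n t, n) ^ 2 ∂sphereMeasure :=
    fun t => integral_nonneg fun n => mul_nonneg (sq_nonneg _) (sq_nonneg _)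
  refine ⟨S', hS'deriv, hS''deriv, hnonneg, ?_⟩
  -- convexity
  have hSderiv_eq : deriv (fun s => ∫ n, F s n ∂sphereMeasure) = S' :=
    funext fun t => (hS'deriv t).deriv
  apply convexOn_of_deriv2_nonneg convex_univ
  · intro s _
    exact (hS'deriv s).differentiableAt.continuousAt.continuousWithinAt
  · intro s _
    exact (hS'deriv s).differentiableAt.differentiableWithinAt
  · intro s _
    show DifferentiableWithinAt ℝ (deriv (fun s => ∫ n, F s n ∂sphereMeasure)) _ s
    rw [hSderiv_eq]
    exact (hS''deriv s).differentiableAt.differentiableWithinAt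
  · intro s _
    show 0 ≤ deriv^[2] (fun s => ∫ n, F s n ∂sphereMeasure) s
    have h2 : deriv^[2] (fun s => ∫ n, F s n ∂sphereMeasure) s
        = deriv (deriv (fun s => ∫ n, F s n ∂sphereMeasure)) s := rfl
    rw [h2, hSderiv_eq, (hS''deriv s).deriv]
    exact hnonneg s
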